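/- Assume X_{i,j} = P_{i,j} = 0 whenever dist(i,j) > R. For all i, j ∈ L and all t ∈ ℝ, writing a_{i,j} = max{0, ⌈(d_{i,j}−1)/2⌉}, one has √‖XP‖ · |C^{pp}_{i,j}(t)| ≤ ‖X‖ · τ^{2a_{i,j}+1} · cosh(τ)/(2a_{i,j}+1)!. -/

import Mathlib

/-- The ℓ²→ℓ² operator norm of a real matrix. -/
noncomputable def l2OpNorm {V : Type*} [Fintype V] [DecidableEq V] (M : Matrix V V ℝ) : ℝ :=
  ‖Matrix.toEuclideanCLM (𝕜 := ℝ) M‖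

/-- `C^{pp}_{i,j}(t) = ∑_{n≥0} (−1)^n t^{2n+1} ((XP)^n X)_{i,j}/(2n+1)!`,
which equals `i[p̂_i(t), p̂_j]` for the harmonic Hamiltonian. -/
noncomputable def Cpp {V : Type*} [Fintype V] [DecidableEq V]
    (X P : Matrix V V ℝ) (i j : V) (t : ℝ) : ℝ :=
  ∑' n : ℕ, (-1 : ℝ) ^ n * t ^ (2 * n + 1) * (((X * P) ^ n * X) i j) /
    (Nat.factorial (2 * n + 1))

lemma l2OpNorm_nonneg {V : Type*} [Fintype V] [DecidableEq V] (M : Matrix V V ℝ) :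
    0 ≤ l2OpNorm M := norm_nonneg _

lemma abs_entry_le_l2OpNorm {V : Type*} [Fintype V] [DecidableEq V] (M : Matrix V V ℝ)
    (i j : V) : |M i j| ≤ l2OpNorm M := by
  classical
  set y := Matrix.toEuclideanCLM (𝕜 := ℝ) M (EuclideanSpace.single j (1:ℝ)) with hy
  have hyi : y i = M i j := by
    rw [hy]
    simp [Matrix.mulVec_single, Matrix.toLin'_apply]
  have h1 : |y i| ≤ ‖y‖ := by
    rw [EuclideanSpace.norm_eq]
    have : |y i| = Real.sqrt (‖y i‖ ^ 2) := by
      rw [Real.sqrt_sq_eq_abs]; simp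
    rw [this]
    apply Real.sqrt_le_sqrt
    exact Finset.single_le_sum (f := fun k => ‖y k‖ ^ 2) (fun k _ => by positivity)
      (Finset.mem_univ i)
  calc |M i j| = |y i| := by rw [hyi]
    _ ≤ ‖y‖ := h1
    _ ≤ l2OpNorm M * ‖EuclideanSpace.single j (1:ℝ)‖ :=
        (Matrix.toEuclideanCLM (𝕜 := ℝ) M).le_opNorm _
    _ = l2OpNorm M := by rw [EuclideanSpace.norm_single]; simp

lemma l2OpNorm_mul_le {V : Type*} [Fintype V] [DecidableEq V] (A B : Matrix V V ℝ) :
    l2OpNorm (A * B) ≤ l2OpNorm A * l2OpNorm B := by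
  unfold l2OpNorm
  rw [map_mul]
  exact norm_mul_le _ _

lemma loc_mul {V : Type*} [Fintype V] [DecidableEq V] {G : SimpleGraph V}
    (hconn : G.Connected) (A B : Matrix V V ℝ) (r s : ℕ)
    (hA : ∀ i j : V, r < G.dist i j → A i j = 0)
    (hB : ∀ i j : V, s < G.dist i j → B i j = 0) :
    ∀ i j : V, r + s < G.dist i j → (A * B) i j = 0 := by
  intro i j hd
  rw [Matrix.mul_apply]
  apply Finset.sum_eq_zero
  intro k _
  by_cases h : r < G.dist i k
  · rw [hA i k h, zero_mul]
  · push_neg at h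
    have : s < G.dist k j := by
      have := hconn.dist_triangle (u := i) (v := k) (w := j)
      omega
    rw [hB k j this, mul_zero]

set_option maxHeartbeats 1600000 in
/-- **Lieb-Robinson bound for local couplings**, `pp` commutator:
`√‖XP‖ · |C^{pp}_{i,j}(t)| ≤ ‖X‖ · τ^{2a+1} · cosh τ / (2a+1)!` with
`a = max{0, ⌈(dist(i,j)/R − 1)/2⌉}` and `τ = max{√‖PX‖, √‖XP‖}·|t|`. -/
theorem lieb_robinson_local_pp {V : Type*} [Fintype V] [DecidableEq V]
    (G : SimpleGraph V) (hconn : G.Connected) (R : ℕ) (hR : 1 ≤ R)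
    (X P : Matrix V V ℝ) (hX : X.IsSymm) (hP : P.IsSymm)
    (hXloc : ∀ i j : V, R < G.dist i j → X i j = 0)
    (hPloc : ∀ i j : V, R < G.dist i j → P i j = 0)
    (i j : V) (t : ℝ) :
    let τ : ℝ := max (Real.sqrt (l2OpNorm (P * X))) (Real.sqrt (l2OpNorm (X * P))) * |t|
    let a : ℕ := (max 0 ⌈((G.dist i j : ℝ) / R - 1) / 2⌉).toNat
    Real.sqrt (l2OpNorm (X * P)) * |Cpp X P i j t| ≤
      l2OpNorm X * τ ^ (2 * a + 1) * Real.cosh τ / (Nat.factorial (2 * a + 1)) := by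
  intro τ a
  set S := Real.sqrt (l2OpNorm (X * P)) with hSdef
  set C := l2OpNorm X with hCdef
  set N := l2OpNorm (X * P) with hNdef
  have hN : 0 ≤ N := l2OpNorm_nonneg _
  have hC : 0 ≤ C := l2OpNorm_nonneg _
  have hS : 0 ≤ S := Real.sqrt_nonneg _
  have hS2 : S ^ 2 = N := Real.sq_sqrt hN
  have hτ : 0 ≤ τ :=
    mul_nonneg (le_trans hS (le_max_right _ _)) (abs_nonneg t)
  have hSt : S * |t| ≤ τ :=
    mul_le_mul_of_nonneg_right (le_max_right _ _) (abs_nonneg t)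
  set f : ℕ → ℝ := fun n =>
    (-1 : ℝ) ^ n * t ^ (2 * n + 1) * (((X * P) ^ n * X) i j) /
      (Nat.factorial (2 * n + 1)) with hfdef
  -- operator norm bound on entries
  have hl2pow : ∀ n : ℕ, l2OpNorm ((X * P) ^ n * X) ≤ N ^ n * C := by
    intro n
    induction n with
    | zero => simp [hCdef]
    | succ n ih =>
      have : (X * P) ^ (n + 1) * X = (X * P) * ((X * P) ^ n * X) := by
        rw [pow_succ', mul_assoc]
      rw [this]
      calc l2OpNorm ((X * P) * ((X * P) ^ n * X))
          ≤ N * l2OpNorm ((X * P) ^ n * X) := l2OpNorm_mul_le _ _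
        _ ≤ N * (N ^ n * C) := by
            exact mul_le_mul_of_nonneg_left ih hN
        _ = N ^ (n + 1) * C := by ring
  have hentry : ∀ n : ℕ, |(((X * P) ^ n * X)) i j| ≤ N ^ n * C := fun n =>
    (abs_entry_le_l2OpNorm _ i j).trans (hl2pow n)
  -- basic term bound
  have hfabs : ∀ n : ℕ, |f n| ≤ |t| ^ (2 * n + 1) * (N ^ n * C) /
      (Nat.factorial (2 * n + 1)) := by
    intro n
    rw [hfdef]
    simp only
    rw [abs_div, abs_mul, abs_mul, abs_pow, abs_pow, abs_neg, abs_one, one_pow, one_mul,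
      Nat.abs_cast]
    gcongr
    exact hentry n
  have hfb : ∀ n : ℕ, S * |f n| ≤ C * τ ^ (2 * n + 1) / (Nat.factorial (2 * n + 1)) := by
    intro n
    have hSN : S ^ (2 * n + 1) = S * N ^ n := by
      rw [pow_succ, pow_mul, hS2]; ring
    calc S * |f n| ≤ S * (|t| ^ (2 * n + 1) * (N ^ n * C) / (Nat.factorial (2 * n + 1))) := by
          exact mul_le_mul_of_nonneg_left (hfabs n) hS
      _ = C * (S * |t|) ^ (2 * n + 1) / (Nat.factorial (2 * n + 1)) := by
          rw [mul_pow, hSN]; ring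
      _ ≤ C * τ ^ (2 * n + 1) / (Nat.factorial (2 * n + 1)) := by
          gcongr
  -- summability
  have hsum : Summable f := by
    apply Summable.of_norm_bounded (g := fun n => (C * |t|) * ((N * t ^ 2) ^ n / Nat.factorial n))
      (((Real.summable_pow_div_factorial (N * t ^ 2)).mul_left (C * |t|)))
    intro n
    rw [Real.norm_eq_abs]
    calc |f n| ≤ |t| ^ (2 * n + 1) * (N ^ n * C) / (Nat.factorial (2 * n + 1)) := hfabs n
      _ ≤ |t| ^ (2 * n + 1) * (N ^ n * C) / (Nat.factorial n) := by
          apply div_le_div_of_nonneg_left (by positivity)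
          · exact_mod_cast Nat.factorial_pos n
          · exact_mod_cast Nat.factorial_le (by omega)
      _ = (C * |t|) * ((N * t ^ 2) ^ n / Nat.factorial n) := by
          rw [pow_succ, pow_mul, sq_abs, mul_pow]
          ring
  -- vanishing of the first `a` terms
  have hloc : ∀ n : ℕ, ∀ i' j' : V, (2 * n + 1) * R < G.dist i' j' →
      ((X * P) ^ n * X) i' j' = 0 := by
    intro n
    induction n with
    | zero =>
      intro i' j' h
      simpa using hXloc i' j' (by omega)
    | succ n ih =>
      have hXP : ∀ i' j' : V, R + R < G.dist i' j' → (X * P) i' j' = 0 :=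
        loc_mul hconn X P R R hXloc hPloc
      intro i' j' h
      have heq : (X * P) ^ (n + 1) * X = (X * P) * ((X * P) ^ n * X) := by
        rw [pow_succ', mul_assoc]
      rw [heq]
      have harith : R + R + (2 * n + 1) * R = (2 * (n + 1) + 1) * R := by ring
      exact loc_mul hconn (X * P) ((X * P) ^ n * X) (R + R) ((2 * n + 1) * R)
        hXP ih i' j' (by rw [harith]; exact h)
  have hvan : ∀ n, n < a → f n = 0 := by
    intro n hn
    have h1 : (n : ℤ) < max 0 ⌈((G.dist i j : ℝ) / R - 1) / 2⌉ := Int.lt_toNat.mp hn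
    have h2 : (n : ℤ) < ⌈((G.dist i j : ℝ) / R - 1) / 2⌉ := by
      rcases lt_max_iff.mp h1 with h | h
      · omega
      · exact h
    have h3 : (n : ℝ) < ((G.dist i j : ℝ) / R - 1) / 2 := by
      exact_mod_cast Int.lt_ceil.mp h2
    have hRpos : (0 : ℝ) < (R : ℝ) := by exact_mod_cast hR
    have h4 : ((2 * n + 1 : ℕ) : ℝ) * R < (G.dist i j : ℝ) := by
      push_cast
      rw [div_sub' (ne_of_gt hRpos), div_div, lt_div_iff₀ (by positivity)] at h3
      nlinarith
    have h5 : (2 * n + 1) * R < G.dist i j := by exact_mod_cast h4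
    have := hloc n i j h5
    rw [hfdef]
    simp [this]
  -- shift the sum
  have hCpp : Cpp X P i j t = ∑' n : ℕ, f (n + a) := by
    have h0 : Cpp X P i j t = ∑' n : ℕ, f n := rfl
    rw [h0, ← Summable.sum_add_tsum_nat_add a hsum, Finset.sum_eq_zero, zero_add]
    intro n hn
    exact hvan n (Finset.mem_range.mp hn)
  have hsum' : Summable fun n => f (n + a) := (summable_nat_add_iff a).mpr hsum
  have hcosh := Real.hasSum_cosh τ
  have hsumb : Summable fun n : ℕ =>
      (C * τ ^ (2 * a + 1) / (Nat.factorial (2 * a + 1))) * (τ ^ (2 * n) / Nat.factorial (2 * n)) :=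
    hcosh.summable.mul_left _
  -- termwise bound after shift
  have hterm : ∀ n : ℕ, S * |f (n + a)| ≤
      (C * τ ^ (2 * a + 1) / (Nat.factorial (2 * a + 1))) * (τ ^ (2 * n) / Nat.factorial (2 * n)) := by
    intro n
    refine (hfb (n + a)).trans ?_
    have hfac : (Nat.factorial (2 * a + 1)) * (Nat.factorial (2 * n)) ≤
        Nat.factorial (2 * (n + a) + 1) := by
      have := Nat.factorial_mul_factorial_dvd_factorial_add (2 * a + 1) (2 * n)
      have h2 : 2 * a + 1 + 2 * n = 2 * (n + a) + 1 := by omega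
      rw [h2] at this
      exact Nat.le_of_dvd (Nat.factorial_pos _) this
    have hτpow : τ ^ (2 * (n + a) + 1) = τ ^ (2 * a + 1) * τ ^ (2 * n) := by
      rw [← pow_add]
      congr 1
      omega
    calc C * τ ^ (2 * (n + a) + 1) / (Nat.factorial (2 * (n + a) + 1))
        ≤ C * τ ^ (2 * (n + a) + 1) / ((Nat.factorial (2 * a + 1)) * (Nat.factorial (2 * n))) := by
          apply div_le_div_of_nonneg_left (by positivity)
          · exact_mod_cast mul_pos (Nat.factorial_pos _) (Nat.factorial_pos _)
          · exact_mod_cast hfac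
      _ = (C * τ ^ (2 * a + 1) / (Nat.factorial (2 * a + 1))) *
            (τ ^ (2 * n) / Nat.factorial (2 * n)) := by
          rw [hτpow]
          push_cast
          ring
  -- put it all together
  calc S * |Cpp X P i j t| = S * |∑' n : ℕ, f (n + a)| := by rw [hCpp]
    _ ≤ S * ∑' n : ℕ, |f (n + a)| := by
        refine mul_le_mul_of_nonneg_left ?_ hS
        simpa [Real.norm_eq_abs] using norm_tsum_le_tsum_norm (f := fun n => f (n + a)) (by
          simpa [Real.norm_eq_abs] using hsum'.abs)
    _ = ∑' n : ℕ, S * |f (n + a)| := by rw [tsum_mul_left]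
    _ ≤ ∑' n : ℕ, (C * τ ^ (2 * a + 1) / (Nat.factorial (2 * a + 1))) *
          (τ ^ (2 * n) / Nat.factorial (2 * n)) := by
        refine Summable.tsum_le_tsum hterm ?_ hsumb
        exact (hsum'.abs.mul_left S)
    _ = (C * τ ^ (2 * a + 1) / (Nat.factorial (2 * a + 1))) * Real.cosh τ := by
        rw [tsum_mul_left, hcosh.tsum_eq]
    _ = C * τ ^ (2 * a + 1) * Real.cosh τ / (Nat.factorial (2 * a + 1)) := by ring
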